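/- F_U(r) = 0 for every r ≤ 0. -/

import Mathlib

open Filter Topology MeasureTheory

/-- `F_U(r) = (1/2π)·∫_{−∞}^{∞} e^{irs}/(c·e^{i·sign(s)·θπ/2}·|s|^θ + 1) ds`
(the real value of the integral, which is real by conjugation symmetry). -/
noncomputable def FUfun (c θ : ℝ) (r : ℝ) : ℝ :=
  ((1 / (2 * Real.pi)) * ∫ s : ℝ,
    Complex.exp (Complex.I * r * s) /
      ((c : ℂ) * Complex.exp (Complex.I * Real.sign s * θ * Real.pi / 2) *
        ((|s| ^ θ : ℝ) : ℂ) + 1)).re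

open Filter Topology MeasureTheory Set Complex

namespace Stmt10Aux

noncomputable def g (c θ r : ℝ) (z : ℂ) : ℂ :=
  Complex.exp (Complex.I * r * z) / ((c : ℂ) * (Complex.I * z) ^ (θ : ℂ) + 1)

noncomputable def κ (θ : ℝ) : ℝ := Real.sqrt (1 + Real.cos (θ * Real.pi / 2))

variable {c θ r : ℝ}

lemma cos_bounds (hθ1 : 1 < θ) (hθ2 : θ < 2) :
    -1 < Real.cos (θ * Real.pi / 2) ∧ Real.cos (θ * Real.pi / 2) ≤ 0 := by
  have hπ := Real.pi_pos
  have h1 : θ * Real.pi / 2 < Real.pi := by nlinarith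
  have h0 : 0 ≤ θ * Real.pi / 2 := by positivity
  constructor
  · have : Real.cos Real.pi < Real.cos (θ * Real.pi / 2) :=
      Real.cos_lt_cos_of_nonneg_of_le_pi h0 le_rfl h1
    rwa [Real.cos_pi] at this
  · exact Real.cos_nonpos_of_pi_div_two_le_of_le (by nlinarith) (by nlinarith)

lemma hκpos (hθ1 : 1 < θ) (hθ2 : θ < 2) : 0 < κ θ :=
  Real.sqrt_pos.mpr (by linarith [(cos_bounds hθ1 hθ2).1])

lemma abs_cpow_real (hθ : θ ≠ 0) (w : ℂ) : ‖w ^ (θ : ℂ)‖ = ‖w‖ ^ θ := by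
  rcases eq_or_ne w 0 with rfl | hw
  · rw [Complex.zero_cpow (by exact_mod_cast hθ), norm_zero]
    exact (Real.zero_rpow hθ).symm
  · rw [Complex.norm_cpow_of_ne_zero hw]
    simp

lemma denom_lb (hc : 0 < c) (hθ1 : 1 < θ) (hθ2 : θ < 2) {w : ℂ} (hw : 0 ≤ w.re) :
    κ θ * max 1 (c * ‖w‖ ^ θ) ≤ ‖(c : ℂ) * w ^ (θ : ℂ) + 1‖ := by
  have hπ := Real.pi_pos
  set a := Real.cos (θ * Real.pi / 2) with ha
  obtain ⟨ha1, ha0⟩ := cos_bounds hθ1 hθ2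
  set u := (c : ℂ) * w ^ (θ : ℂ) with hu
  set t := c * ‖w‖ ^ θ with htdef
  have ht0 : 0 ≤ t := by positivity
  have habs : ‖u‖ = t := by
    rw [hu, norm_mul, Complex.norm_real, Real.norm_eq_abs, abs_of_pos hc, abs_cpow_real (by linarith)]
  have hre : a * t ≤ u.re := by
    have h1 : u.re = c * (‖w‖ ^ θ * Real.cos (Complex.arg w * θ)) := by
      rw [hu, Complex.re_ofReal_mul, Complex.cpow_ofReal_re]
    have harg : |Complex.arg w| ≤ Real.pi / 2 := Complex.abs_arg_le_pi_div_two_iff.mpr hw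
    have h2 : a ≤ Real.cos (Complex.arg w * θ) := by
      have hb : |Complex.arg w * θ| ≤ θ * Real.pi / 2 := by
        rw [abs_mul, abs_of_pos (by linarith : (0:ℝ) < θ)]
        calc |Complex.arg w| * θ ≤ (Real.pi / 2) * θ :=
              mul_le_mul_of_nonneg_right harg (by linarith)
          _ = θ * Real.pi / 2 := by ring
      have := Real.cos_le_cos_of_nonneg_of_le_pi (abs_nonneg (Complex.arg w * θ))
        (by nlinarith : θ * Real.pi / 2 ≤ Real.pi) hb
      rwa [Real.cos_abs] at this
    have hwθ : 0 ≤ ‖w‖ ^ θ := Real.rpow_nonneg (norm_nonneg w) θ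
    rw [h1, htdef]
    nlinarith
  have habs2 : ‖u + 1‖ ^ 2 = t ^ 2 + 2 * u.re + 1 := by
    have h1 : ‖u + 1‖ ^ 2 = (u.re + 1) ^ 2 + u.im ^ 2 := by
      rw [Complex.sq_norm, Complex.normSq_apply]
      simp [Complex.add_re, Complex.add_im]
      ring
    have h2 : u.re ^ 2 + u.im ^ 2 = t ^ 2 := by
      rw [← habs, Complex.sq_norm, Complex.normSq_apply]; ring
    nlinarith [h1, h2]
  have hmax : (max 1 t) ^ 2 ≤ t ^ 2 + 1 := by
    rcases le_total 1 t with h | h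
    · rw [max_eq_right h]; nlinarith
    · rw [max_eq_left h]; nlinarith
  have key : (κ θ * max 1 t) ^ 2 ≤ ‖u + 1‖ ^ 2 := by
    rw [mul_pow, κ, Real.sq_sqrt (by linarith : (0:ℝ) ≤ 1 + a)]
    nlinarith [mul_le_mul_of_nonneg_left hmax (by linarith : (0:ℝ) ≤ 1 + a),
      mul_nonneg (neg_nonneg.mpr ha0) (sq_nonneg (t - 1)), hre, habs2]
  have h1 : 0 ≤ κ θ * max 1 t :=
    mul_nonneg (Real.sqrt_nonneg _) (le_trans zero_le_one (le_max_left _ _))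
  have := Real.sqrt_le_sqrt key
  rwa [Real.sqrt_sq h1, Real.sqrt_sq (norm_nonneg _)] at this

lemma denom_pos (hc : 0 < c) (hθ1 : 1 < θ) (hθ2 : θ < 2) : ∀ {w : ℂ}, 0 ≤ w.re →
    (c : ℂ) * w ^ (θ : ℂ) + 1 ≠ 0 := by
  intro w hw h
  have h2 := denom_lb hc hθ1 hθ2 hw
  rw [h, norm_zero] at h2
  have h3 : 0 < κ θ * max 1 (c * ‖w‖ ^ θ) :=
    mul_pos (hκpos hθ1 hθ2) (lt_of_lt_of_le one_pos (le_max_left _ _))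
  linarith

lemma g_bound (hc : 0 < c) (hθ1 : 1 < θ) (hθ2 : θ < 2) (hr : r ≤ 0) {z : ℂ} (hz : z.im ≤ 0) :
    ‖g c θ r z‖ ≤ (κ θ * max 1 (c * ‖z‖ ^ θ))⁻¹ := by
  have hiz : 0 ≤ (Complex.I * z).re := by
    simp only [Complex.mul_re, Complex.I_re, Complex.I_im, zero_mul, one_mul, zero_sub]
    linarith
  have hnum : ‖Complex.exp (Complex.I * r * z)‖ ≤ 1 := by
    rw [Complex.norm_exp]
    rw [Real.exp_le_one_iff]
    have h : (Complex.I * r * z).re = -(r * z.im) := by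
      simp [Complex.mul_re, Complex.mul_im]
    rw [h]
    nlinarith [mul_nonneg (neg_nonneg.mpr hr) (neg_nonneg.mpr hz)]
  have hd := denom_lb hc hθ1 hθ2 hiz
  rw [norm_mul, Complex.norm_I, one_mul] at hd
  have hpos : 0 < κ θ * max 1 (c * ‖z‖ ^ θ) :=
    mul_pos (hκpos hθ1 hθ2) (lt_of_lt_of_le one_pos (le_max_left _ _))
  rw [g, norm_div, ← one_div]
  exact div_le_div₀ zero_le_one hnum hpos (by exact hd)

lemma g_contAt (hc : 0 < c) (hθ1 : 1 < θ) (hθ2 : θ < 2) {z : ℂ} (hz : z.im ≤ 0) :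
    ContinuousAt (g c θ r) z := by
  have hiz : 0 ≤ (Complex.I * z).re := by
    simp only [Complex.mul_re, Complex.I_re, Complex.I_im, zero_mul, one_mul, zero_sub]
    linarith
  apply ContinuousAt.div
  · exact (Complex.continuous_exp.comp (continuous_const.mul continuous_id)).continuousAt
  · apply ContinuousAt.add _ continuousAt_const
    apply ContinuousAt.mul continuousAt_const
    have h1 : ContinuousAt (fun w : ℂ => w ^ (θ : ℂ)) (Complex.I * z) :=
      Complex.continuousAt_cpow_const_of_re_pos (Or.inl hiz) (by simpa using by linarith : 0 < (θ : ℂ).re)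
    exact h1.comp (continuous_const.mul continuous_id).continuousAt
  · exact denom_pos hc hθ1 hθ2 hiz

lemma g_diffAt (hc : 0 < c) (hθ1 : 1 < θ) (hθ2 : θ < 2) {z : ℂ} (hz : z.im < 0) :
    DifferentiableAt ℂ (g c θ r) z := by
  have hiz : 0 < (Complex.I * z).re := by
    simp only [Complex.mul_re, Complex.I_re, Complex.I_im, zero_mul, one_mul, zero_sub]
    linarith
  apply DifferentiableAt.div
  · exact (differentiableAt_id.const_mul _).cexp
  · apply DifferentiableAt.add_const
    apply DifferentiableAt.const_mul
    exact (differentiableAt_id.const_mul Complex.I).cpow (differentiableAt_const _) (Or.inl hiz)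
  · exact denom_pos hc hθ1 hθ2 hiz.le

lemma core_ineq (hc : 0 < c) (hθ1 : 1 < θ) (hθ2 : θ < 2) (x : ℝ) :
    (1 + |x|) ^ θ ≤ 2 ^ θ * max 1 c⁻¹ * max 1 (c * |x| ^ θ) := by
  have hθ0 : (0:ℝ) < θ := by linarith
  have e1 : (1 + |x|) ≤ 2 * max 1 |x| := by
    have := le_max_left 1 |x|; have := le_max_right 1 |x|; linarith
  have e2 : (1 + |x|) ^ θ ≤ (2 * max 1 |x|) ^ θ :=
    Real.rpow_le_rpow (by positivity) e1 hθ0.le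
  have e3 : (2 * max 1 |x|) ^ θ = 2 ^ θ * (max 1 |x|) ^ θ :=
    Real.mul_rpow (by norm_num) (le_trans zero_le_one (le_max_left _ _))
  have e4 : (max 1 |x|) ^ θ = max 1 (|x| ^ θ) := by
    rcases le_total |x| 1 with h | h
    · rw [max_eq_left h, Real.one_rpow,
        max_eq_left (Real.rpow_le_one (abs_nonneg x) h hθ0.le)]
    · rw [max_eq_right h, max_eq_right (Real.one_le_rpow h hθ0.le)]
  have e5 : max 1 (|x| ^ θ) ≤ max 1 c⁻¹ * max 1 (c * |x| ^ θ) := by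
    set t := |x| ^ θ with htd
    have ht0 : 0 ≤ t := Real.rpow_nonneg (abs_nonneg x) θ
    apply max_le
    · nlinarith [le_max_left (1:ℝ) c⁻¹, le_max_left (1:ℝ) (c * t)]
    · calc t = c⁻¹ * (c * t) := by field_simp
        _ ≤ max 1 c⁻¹ * max 1 (c * t) :=
          mul_le_mul (le_max_right _ _) (le_max_right _ _) (by positivity)
            (le_trans zero_le_one (le_max_left _ _))
  calc (1 + |x|) ^ θ ≤ 2 ^ θ * (max 1 |x|) ^ θ := by rw [← e3]; exact e2
    _ = 2 ^ θ * max 1 (|x| ^ θ) := by rw [e4]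
    _ ≤ 2 ^ θ * (max 1 c⁻¹ * max 1 (c * |x| ^ θ)) := by
        apply mul_le_mul_of_nonneg_left e5 (by positivity)
    _ = 2 ^ θ * max 1 c⁻¹ * max 1 (c * |x| ^ θ) := by ring

lemma inv_max_le (hc : 0 < c) (hθ1 : 1 < θ) (hθ2 : θ < 2) (x : ℝ) :
    (max 1 (c * |x| ^ θ))⁻¹ ≤ 2 ^ θ * max 1 c⁻¹ * (1 + |x|) ^ (-θ) := by
  have ha : (0:ℝ) < (1 + |x|) ^ θ := Real.rpow_pos_of_pos (by positivity) θ
  have hb : (0:ℝ) < max 1 (c * |x| ^ θ) := lt_of_lt_of_le one_pos (le_max_left _ _)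
  have hK : (0:ℝ) < 2 ^ θ * max 1 c⁻¹ := by positivity
  rw [Real.rpow_neg (by positivity), show (2:ℝ) ^ θ * max 1 c⁻¹ * ((1 + |x|) ^ θ)⁻¹
      = (2 ^ θ * max 1 c⁻¹) / ((1 + |x|) ^ θ) from (div_eq_mul_inv _ _).symm,
    inv_eq_one_div, div_le_div_iff₀ hb ha]
  have := core_ineq hc hθ1 hθ2 x
  linarith

lemma bound_integrable (hc : 0 < c) (hθ1 : 1 < θ) (hθ2 : θ < 2) :
    Integrable (fun x : ℝ => (κ θ * max 1 (c * |x| ^ θ))⁻¹) := by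
  have h1 : Integrable (fun x : ℝ => (1 + ‖x‖) ^ (-θ)) :=
    integrable_one_add_norm (by simp; linarith)
  have hκ := hκpos hθ1 hθ2
  apply Integrable.mono' (h1.const_mul ((κ θ)⁻¹ * (2 ^ θ * max 1 c⁻¹)))
  · apply Continuous.aestronglyMeasurable
    apply Continuous.inv₀
    · exact continuous_const.mul (continuous_const.max
        (continuous_const.mul (_root_.continuous_abs.rpow_const (fun x => Or.inr (by linarith)))))
    · intro x
      exact ne_of_gt (mul_pos hκ (lt_of_lt_of_le one_pos (le_max_left _ _)))
  · apply Eventually.of_forall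
    intro x
    have hb : (0:ℝ) < max 1 (c * |x| ^ θ) := lt_of_lt_of_le one_pos (le_max_left _ _)
    rw [Real.norm_eq_abs, Real.norm_eq_abs, _root_.abs_of_nonneg (by positivity), mul_inv]
    calc (κ θ)⁻¹ * (max 1 (c * |x| ^ θ))⁻¹
        ≤ (κ θ)⁻¹ * (2 ^ θ * max 1 c⁻¹ * (1 + |x|) ^ (-θ)) :=
          mul_le_mul_of_nonneg_left (inv_max_le hc hθ1 hθ2 x) (by positivity)
      _ = (κ θ)⁻¹ * (2 ^ θ * max 1 c⁻¹) * (1 + |x|) ^ (-θ) := by ring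

lemma integrable_line (hc : 0 < c) (hθ1 : 1 < θ) (hθ2 : θ < 2) (hr : r ≤ 0)
    (y : ℝ) (hy : y ≤ 0) : Integrable (fun x : ℝ => g c θ r (x + y * Complex.I)) := by
  apply Integrable.mono' (bound_integrable hc hθ1 hθ2)
  · apply Continuous.aestronglyMeasurable
    rw [continuous_iff_continuousAt]
    intro x
    exact (g_contAt hc hθ1 hθ2 (by simp [hy])).comp
      ((Complex.continuous_ofReal.add continuous_const).continuousAt)
  · apply Eventually.of_forall
    intro x
    have h1 := g_bound hc hθ1 hθ2 hr (z := ↑x + ↑y * Complex.I) (by simp [hy])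
    apply h1.trans
    apply inv_anti₀ (mul_pos (hκpos hθ1 hθ2) (lt_of_lt_of_le one_pos (le_max_left _ _)))
    apply mul_le_mul_of_nonneg_left _ (Real.sqrt_nonneg _)
    apply max_le_max le_rfl
    apply mul_le_mul_of_nonneg_left _ hc.le
    apply Real.rpow_le_rpow (abs_nonneg x) _ (by linarith)
    have := Complex.abs_re_le_norm (↑x + ↑y * Complex.I)
    simpa using this

lemma g_bound' (hc : 0 < c) (hθ1 : 1 < θ) (hθ2 : θ < 2) (hr : r ≤ 0) {z : ℂ}
    (hz : z.im ≤ 0) {R : ℝ} (hR : 0 ≤ R) (hzR : R ≤ ‖z‖) :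
    ‖g c θ r z‖ ≤ (κ θ * max 1 (c * R ^ θ))⁻¹ := by
  apply (g_bound hc hθ1 hθ2 hr hz).trans
  apply inv_anti₀ (mul_pos (hκpos hθ1 hθ2) (lt_of_lt_of_le one_pos (le_max_left _ _)))
  apply mul_le_mul_of_nonneg_left _ (Real.sqrt_nonneg _)
  exact max_le_max le_rfl (mul_le_mul_of_nonneg_left
    (Real.rpow_le_rpow hR hzR (by linarith)) hc.le)

lemma tendsto_inv_max (hc : 0 < c) (hθ1 : 1 < θ) (hθ2 : θ < 2) :
    Tendsto (fun R : ℝ => (κ θ * max 1 (c * R ^ θ))⁻¹) atTop (𝓝 0) := by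
  apply Tendsto.inv_tendsto_atTop
  apply Tendsto.const_mul_atTop (hκpos hθ1 hθ2)
  apply tendsto_atTop_mono (fun R => le_max_right 1 (c * R ^ θ))
  exact Tendsto.const_mul_atTop hc (tendsto_rpow_atTop (by linarith))

lemma shift_eq (hc : 0 < c) (hθ1 : 1 < θ) (hθ2 : θ < 2) (hr : r ≤ 0) (T : ℝ) (hT : T ≤ 0) :
    ∫ x : ℝ, g c θ r (x + T * Complex.I) = ∫ x : ℝ, g c θ r (x + (0:ℝ) * Complex.I) := by
  have hline := integrable_line hc hθ1 hθ2 hr T hT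
  have hline0 := integrable_line hc hθ1 hθ2 hr 0 le_rfl
  have hκ := hκpos hθ1 hθ2
  have rect : ∀ n : ℕ,
      (∫ x in (-(n:ℝ))..(n:ℝ), g c θ r (x + T * Complex.I))
        - (∫ x in (-(n:ℝ))..(n:ℝ), g c θ r (x + (0:ℝ) * Complex.I))
        + Complex.I • (∫ y in T..(0:ℝ), g c θ r ((n:ℝ) + y * Complex.I))
        - Complex.I • (∫ y in T..(0:ℝ), g c θ r (((-(n:ℝ) : ℝ) : ℂ) + y * Complex.I)) = 0 := by
    intro n
    have := Complex.integral_boundary_rect_eq_zero_of_differentiable_on_off_countable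
      (g c θ r) ⟨-(n:ℝ), T⟩ ⟨(n:ℝ), (0:ℝ)⟩ ∅ Set.countable_empty
      (by
        intro a ha
        have h2 : a.im ∈ Set.uIcc T (0:ℝ) := (Complex.mem_reProdIm.mp ha).2
        rw [Set.uIcc_of_le hT] at h2
        exact (g_contAt hc hθ1 hθ2 h2.2).continuousWithinAt)
      (by
        intro x hx
        have h2 : x.im ∈ Set.Ioo (min T 0) (max T 0) := (Complex.mem_reProdIm.mp hx.1).2
        rw [max_eq_right hT] at h2
        exact g_diffAt hc hθ1 hθ2 h2.2)
    exact this
  have hnegn : Tendsto (fun n : ℕ => -(n:ℝ)) atTop atBot :=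
    tendsto_neg_atTop_atBot.comp tendsto_natCast_atTop_atTop
  have h1 : Tendsto (fun n : ℕ => ∫ x in (-(n:ℝ))..(n:ℝ), g c θ r (x + T * Complex.I))
      atTop (𝓝 (∫ x : ℝ, g c θ r (x + T * Complex.I))) :=
    intervalIntegral_tendsto_integral hline hnegn tendsto_natCast_atTop_atTop
  have h2 : Tendsto (fun n : ℕ => ∫ x in (-(n:ℝ))..(n:ℝ), g c θ r (x + (0:ℝ) * Complex.I))
      atTop (𝓝 (∫ x : ℝ, g c θ r (x + (0:ℝ) * Complex.I))) :=
    intervalIntegral_tendsto_integral hline0 hnegn tendsto_natCast_atTop_atTop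
  have hCn : Tendsto (fun n : ℕ => (κ θ * max 1 (c * (n:ℝ) ^ θ))⁻¹ * |(0:ℝ) - T|)
      atTop (𝓝 0) := by
    have := ((tendsto_inv_max hc hθ1 hθ2).comp tendsto_natCast_atTop_atTop).mul_const
      |(0:ℝ) - T|
    simpa using this
  have hyim : ∀ y : ℝ, y ∈ Set.uIoc T (0:ℝ) → y ≤ 0 := by
    intro y hy
    rw [Set.uIoc_of_le hT] at hy
    exact hy.2
  have hside : ∀ (s : ℝ → ℂ), (∀ n : ℕ, ∀ y ∈ Set.uIoc T (0:ℝ),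
        ‖g c θ r (s (n:ℝ) + y * Complex.I)‖ ≤ (κ θ * max 1 (c * (n:ℝ) ^ θ))⁻¹) →
      Tendsto (fun n : ℕ => Complex.I • ∫ y in T..(0:ℝ), g c θ r (s (n:ℝ) + y * Complex.I))
        atTop (𝓝 0) := by
    intro s hs
    apply squeeze_zero_norm _ hCn
    intro n
    rw [norm_smul, Complex.norm_I, one_mul]
    exact intervalIntegral.norm_integral_le_of_norm_le_const (hs n)
  have habsre : ∀ a y : ℝ, |a| ≤ ‖(↑a + ↑y * Complex.I : ℂ)‖ := by
    intro a y
    have h := Complex.abs_re_le_norm (↑a + ↑y * Complex.I)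
    simpa using h
  have hS : Tendsto (fun n : ℕ =>
      Complex.I • ∫ y in T..(0:ℝ), g c θ r ((n:ℝ) + y * Complex.I)) atTop (𝓝 0) := by
    apply hside (fun R => (R : ℂ))
    intro n y hy
    apply g_bound' hc hθ1 hθ2 hr (by simp [hyim y hy]) (Nat.cast_nonneg n)
    calc ((n:ℝ)) = |(n:ℝ)| := (_root_.abs_of_nonneg (Nat.cast_nonneg n)).symm
      _ ≤ _ := habsre (n:ℝ) y
  have hS' : Tendsto (fun n : ℕ =>
      Complex.I • ∫ y in T..(0:ℝ), g c θ r (((-(n:ℝ) : ℝ) : ℂ) + y * Complex.I)) atTop (𝓝 0) := by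
    apply hside (fun R => ((-R : ℝ) : ℂ))
    intro n y hy
    have hb : ‖g c θ r (↑(-(n:ℝ)) + ↑y * Complex.I)‖ ≤ (κ θ * max 1 (c * (n:ℝ) ^ θ))⁻¹ := by
      apply g_bound' hc hθ1 hθ2 hr (by simp [hyim y hy]) (Nat.cast_nonneg n)
      have h := habsre (-(n:ℝ)) y
      rwa [abs_neg, _root_.abs_of_nonneg (Nat.cast_nonneg n)] at h
    simpa using hb
  have hconst : Tendsto (fun n : ℕ =>
      (∫ x in (-(n:ℝ))..(n:ℝ), g c θ r (x + T * Complex.I))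
        - (∫ x in (-(n:ℝ))..(n:ℝ), g c θ r (x + (0:ℝ) * Complex.I))
        + Complex.I • (∫ y in T..(0:ℝ), g c θ r ((n:ℝ) + y * Complex.I))
        - Complex.I • (∫ y in T..(0:ℝ), g c θ r (((-(n:ℝ) : ℝ) : ℂ) + y * Complex.I))) atTop
      (𝓝 ((∫ x : ℝ, g c θ r (x + T * Complex.I))
        - (∫ x : ℝ, g c θ r (x + (0:ℝ) * Complex.I)) + 0 - 0)) :=
    ((h1.sub h2).add hS).sub hS'
  rw [funext rect] at hconst
  have h0 := tendsto_nhds_unique hconst tendsto_const_nhds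
  rw [add_zero, sub_zero] at h0
  exact sub_eq_zero.mp h0

lemma integral_g_zero (hc : 0 < c) (hθ1 : 1 < θ) (hθ2 : θ < 2) (hr : r ≤ 0) :
    ∫ x : ℝ, g c θ r (x + (0:ℝ) * Complex.I) = 0 := by
  have hκ := hκpos hθ1 hθ2
  have key : ∀ n : ℕ, (∫ x : ℝ, g c θ r (x + ((-((n:ℝ)+1) : ℝ) : ℂ) * Complex.I))
      = ∫ x : ℝ, g c θ r (x + (0:ℝ) * Complex.I) := fun n =>
    shift_eq hc hθ1 hθ2 hr (-((n:ℝ)+1)) (by linarith [Nat.cast_nonneg (α := ℝ) n])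
  have habsim : ∀ a y : ℝ, |y| ≤ ‖(↑a + ↑y * Complex.I : ℂ)‖ := by
    intro a y
    have h := Complex.abs_im_le_norm (↑a + ↑y * Complex.I)
    simpa using h
  have habsre : ∀ a y : ℝ, |a| ≤ ‖(↑a + ↑y * Complex.I : ℂ)‖ := by
    intro a y
    have h := Complex.abs_re_le_norm (↑a + ↑y * Complex.I)
    simpa using h
  have hlim : Tendsto (fun n : ℕ =>
      ∫ x : ℝ, g c θ r (x + ((-((n:ℝ)+1) : ℝ) : ℂ) * Complex.I)) atTop (𝓝 0) := by
    have hdc := MeasureTheory.tendsto_integral_of_dominated_convergence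
      (F := fun (n : ℕ) (x : ℝ) => g c θ r (x + ((-((n:ℝ)+1) : ℝ) : ℂ) * Complex.I))
      (f := fun _ : ℝ => (0 : ℂ)) (bound := fun x : ℝ => (κ θ * max 1 (c * |x| ^ θ))⁻¹)
      (fun n => (integrable_line hc hθ1 hθ2 hr (-((n:ℝ)+1))
        (by linarith [Nat.cast_nonneg (α := ℝ) n])).aestronglyMeasurable)
      (bound_integrable hc hθ1 hθ2)
      (fun n => Eventually.of_forall (fun x => by
        apply g_bound' hc hθ1 hθ2 hr
          (by simp; linarith [Nat.cast_nonneg (α := ℝ) n]) (abs_nonneg x)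
        exact habsre x (-((n:ℝ)+1))))
      (Eventually.of_forall (fun x => by
        apply squeeze_zero_norm (f := fun n : ℕ => g c θ r (x + ((-((n:ℝ)+1) : ℝ) : ℂ) * Complex.I))
          (a := fun n : ℕ => (κ θ * max 1 (c * ((n:ℝ)+1) ^ θ))⁻¹)
        · intro n
          apply g_bound' hc hθ1 hθ2 hr
            (by simp; linarith [Nat.cast_nonneg (α := ℝ) n]) (by positivity)
          have h := habsim x (-((n:ℝ)+1))
          rwa [abs_neg, _root_.abs_of_nonneg (by positivity : (0:ℝ) ≤ (n:ℝ)+1)] at h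
        · exact (tendsto_inv_max hc hθ1 hθ2).comp
            (tendsto_atTop_add_const_right atTop 1 tendsto_natCast_atTop_atTop)))
    simpa using hdc
  rw [funext key] at hlim
  exact tendsto_nhds_unique tendsto_const_nhds hlim

lemma pow_line (hθ1 : 1 < θ) (hθ2 : θ < 2) (s : ℝ) :
    (Complex.I * (s : ℂ)) ^ (θ : ℂ)
      = Complex.exp (Complex.I * Real.sign s * θ * Real.pi / 2) * ((|s| ^ θ : ℝ) : ℂ) := by
  have hθ0 : θ ≠ 0 := by linarith
  rcases lt_trichotomy s 0 with hs | rfl | hs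
  · have harg : Complex.arg (Complex.I * (s : ℂ)) = -(Real.pi / 2) := by
      rw [show Complex.I * (s:ℂ) = ((-s : ℝ) : ℂ) * (-Complex.I) by push_cast; ring]
      rw [Complex.arg_real_mul _ (by linarith : (0:ℝ) < -s), Complex.arg_neg_I]
    have habs : ‖Complex.I * (s : ℂ)‖ = |s| := by
      rw [norm_mul, Complex.norm_I, one_mul, Complex.norm_real, Real.norm_eq_abs]
    rw [Complex.cpow_ofReal, habs, harg, Real.sign_of_neg hs]
    rw [show Complex.I * ((-1 : ℝ) : ℂ) * θ * Real.pi / 2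
        = ((-1 * θ * Real.pi / 2 : ℝ) : ℂ) * Complex.I by push_cast; ring]
    rw [Complex.exp_mul_I, ← Complex.ofReal_cos, ← Complex.ofReal_sin]
    rw [show -(Real.pi / 2) * θ = -1 * θ * Real.pi / 2 by ring]
    ring
  · rw [Complex.ofReal_zero, mul_zero, Complex.zero_cpow (by exact_mod_cast hθ0)]
    rw [abs_zero, Real.zero_rpow hθ0]
    simp
  · have harg : Complex.arg (Complex.I * (s : ℂ)) = Real.pi / 2 := by
      rw [show Complex.I * (s:ℂ) = ((s : ℝ) : ℂ) * Complex.I by ring]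
      rw [Complex.arg_real_mul _ hs, Complex.arg_I]
    have habs : ‖Complex.I * (s : ℂ)‖ = |s| := by
      rw [norm_mul, Complex.norm_I, one_mul, Complex.norm_real, Real.norm_eq_abs]
    rw [Complex.cpow_ofReal, habs, harg, Real.sign_of_pos hs]
    rw [show Complex.I * ((1 : ℝ) : ℂ) * θ * Real.pi / 2
        = ((1 * θ * Real.pi / 2 : ℝ) : ℂ) * Complex.I by push_cast; ring]
    rw [Complex.exp_mul_I, ← Complex.ofReal_cos, ← Complex.ofReal_sin]
    rw [show Real.pi / 2 * θ = 1 * θ * Real.pi / 2 by ring]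
    ring

end Stmt10Aux

/-- `F_U(r) = 0` for every `r ≤ 0`. -/
theorem stmt10 (c θ : ℝ) (hc : 0 < c) (hθ1 : 1 < θ) (hθ2 : θ < 2) :
    ∀ r : ℝ, r ≤ 0 → FUfun c θ r = 0 := by
  intro r hr
  have h1 : ∀ s : ℝ, Complex.exp (Complex.I * r * s) /
      ((c : ℂ) * Complex.exp (Complex.I * Real.sign s * θ * Real.pi / 2) *
        ((|s| ^ θ : ℝ) : ℂ) + 1)
      = Stmt10Aux.g c θ r (s + (0:ℝ) * Complex.I) := by
    intro s
    have hz : ((s : ℂ) + ((0:ℝ) : ℂ) * Complex.I) = (s : ℂ) := by simp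
    rw [hz, Stmt10Aux.g, Stmt10Aux.pow_line hθ1 hθ2 s, ← mul_assoc]
  have h0 : (∫ s : ℝ, Complex.exp (Complex.I * r * s) /
      ((c : ℂ) * Complex.exp (Complex.I * Real.sign s * θ * Real.pi / 2) *
        ((|s| ^ θ : ℝ) : ℂ) + 1)) = 0 := by
    simp only [h1]
    exact Stmt10Aux.integral_g_zero hc hθ1 hθ2 hr
  rw [FUfun, h0, mul_zero, Complex.zero_re]
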